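/- For all positive integers d ≤ n, there exists a function f : {±1}^n → [-1,1] whose Fourier expansion is supported on sets of size exactly d (i.e., f is homogeneous of degree d) and which satisfies ‖f̂_d‖_1 = (1/2)·√((1/n)·binom(n,d)). -/

import Mathlib

/-- The sign ±1 corresponding to a boolean: `true ↦ 1`, `false ↦ -1`. -/
noncomputable def sgn (b : Bool) : ℝ := if b then 1 else -1

/-- The character (monomial) `χ_S(x) = ∏_{j ∈ S} x_j` on the cube `{±1}^n`. -/
noncomputable def chi {n : ℕ} (S : Finset (Fin n)) (x : Fin n → Bool) : ℝ :=
  ∏ i ∈ S, sgn (x i)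

/-- The Fourier coefficient `f̂(S) = E[f(X) χ_S(X)]` for `X` uniform on `{±1}^n`. -/
noncomputable def fcoeff {n : ℕ} (f : (Fin n → Bool) → ℝ) (S : Finset (Fin n)) : ℝ :=
  (∑ x : Fin n → Bool, f x * chi S x) / 2 ^ n

/-- The degree-`ℓ` homogeneous part `f_ℓ(x) = ∑_{|S| = ℓ} f̂(S) χ_S(x)`. -/
noncomputable def homPart {n : ℕ} (f : (Fin n → Bool) → ℝ) (ℓ : ℕ) (x : Fin n → Bool) : ℝ :=
  ∑ S ∈ Finset.univ.filter (fun S : Finset (Fin n) => S.card = ℓ), fcoeff f S * chi S x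

/-- `C(d, ℓ)`: the coefficient of `z^ℓ` in the degree-`d` Chebyshev polynomial `T_d`. -/
noncomputable def chebCoeff (d ℓ : ℕ) : ℝ := (Polynomial.Chebyshev.T ℝ (d : ℤ)).coeff ℓ

lemma sgn_cases (b : Bool) : sgn b = 1 ∨ sgn b = -1 := by
  cases b <;> simp [sgn]

lemma chi_cases {n : ℕ} (S : Finset (Fin n)) (x : Fin n → Bool) :
    chi S x = 1 ∨ chi S x = -1 := by
  unfold chi
  refine Finset.prod_induction _ (fun r => r = 1 ∨ r = -1) ?_ (Or.inl rfl)
    (fun i _ => sgn_cases (x i))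
  rintro a b (rfl | rfl) (rfl | rfl) <;> norm_num

lemma sum_chi_mul_chi {n : ℕ} (S T : Finset (Fin n)) :
    ∑ x : Fin n → Bool, chi S x * chi T x = if S = T then (2:ℝ)^n else 0 := by
  classical
  have key : ∀ x : Fin n → Bool, chi S x * chi T x =
      ∏ i : Fin n, ((if i ∈ S then sgn (x i) else 1) * (if i ∈ T then sgn (x i) else 1)) := by
    intro x
    rw [Finset.prod_mul_distrib]
    unfold chi
    congr 1
    · rw [Finset.prod_ite_mem, Finset.univ_inter]
    · rw [Finset.prod_ite_mem, Finset.univ_inter]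
  simp only [key]
  rw [← Fintype.prod_sum
    (fun (i : Fin n) (b : Bool) => (if i ∈ S then sgn b else 1) * (if i ∈ T then sgn b else 1))]
  have fac : ∀ i : Fin n,
      (∑ b : Bool, (if i ∈ S then sgn b else 1) * (if i ∈ T then sgn b else 1))
        = if (i ∈ S ↔ i ∈ T) then 2 else 0 := by
    intro i
    by_cases hS : i ∈ S <;> by_cases hT : i ∈ T <;>
      simp [hS, hT, sgn] <;> norm_num
  simp only [fac]
  by_cases h : S = T
  · subst h
    simp
  · rw [if_neg h]
    obtain ⟨i, hi⟩ : ∃ i, ¬ (i ∈ S ↔ i ∈ T) := by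
      by_contra hall
      push_neg at hall
      exact h (Finset.ext fun i => (hall i))
    exact Finset.prod_eq_zero (Finset.mem_univ i) (by rw [if_neg hi])


lemma mgf_bound {n : ℕ} (D : Finset (Finset (Fin n))) (l : ℝ) (c : Finset (Fin n) → ℝ)
    (hc : ∀ S, c S = 1 ∨ c S = -1) :
    ∑ ε : Finset (Fin n) → Bool, Real.exp (l * ∑ S ∈ D, sgn (ε S) * c S)
      ≤ (Fintype.card (Finset (Fin n) → Bool) : ℝ) * Real.exp (l ^ 2 * D.card / 2) := by
  classical
  have key : ∀ ε : Finset (Fin n) → Bool,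
      Real.exp (l * ∑ S ∈ D, sgn (ε S) * c S)
        = ∏ S : Finset (Fin n), Real.exp (l * (if S ∈ D then sgn (ε S) * c S else 0)) := by
    intro ε
    rw [← Real.exp_sum]
    congr 1
    rw [Finset.mul_sum]
    symm
    calc ∑ x : Finset (Fin n), (l * if x ∈ D then sgn (ε x) * c x else 0)
        = ∑ x : Finset (Fin n), (if x ∈ D then l * (sgn (ε x) * c x) else 0) :=
          Finset.sum_congr rfl (fun S _ => by by_cases h : S ∈ D <;> simp [h])
      _ = ∑ x ∈ Finset.univ ∩ D, l * (sgn (ε x) * c x) := Finset.sum_ite_mem _ _ _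
      _ = ∑ S ∈ D, l * (sgn (ε S) * c S) := by rw [Finset.univ_inter]
  simp only [key]
  rw [← Fintype.prod_sum
    (fun (S : Finset (Fin n)) (b : Bool) => Real.exp (l * (if S ∈ D then sgn b * c S else 0)))]
  have step : ∀ S : Finset (Fin n),
      (∑ b : Bool, Real.exp (l * (if S ∈ D then sgn b * c S else 0)))
        ≤ 2 * Real.exp (l ^ 2 / 2 * (if S ∈ D then 1 else 0)) := by
    intro S
    by_cases h : S ∈ D
    · rcases hc S with hcS | hcS <;>
      · simp only [h, if_pos, Fintype.sum_bool, hcS, sgn]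
        norm_num
        have := Real.cosh_le_exp_half_sq l
        rw [Real.cosh_eq] at this
        nlinarith [this, Real.exp_pos l, Real.exp_pos (-l)]
    · simp [h]
  calc ∏ S : Finset (Fin n), (∑ b : Bool, Real.exp (l * (if S ∈ D then sgn b * c S else 0)))
      ≤ ∏ S : Finset (Fin n), 2 * Real.exp (l ^ 2 / 2 * (if S ∈ D then 1 else 0)) := by
        refine Finset.prod_le_prod (fun S _ => ?_) (fun S _ => step S)
        refine Finset.sum_nonneg (fun b _ => (Real.exp_pos _).le)
    _ = (Fintype.card (Finset (Fin n) → Bool) : ℝ) * Real.exp (l ^ 2 * D.card / 2) := by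
        rw [Finset.prod_mul_distrib, Finset.prod_const, ← Real.exp_sum]
        congr 1
        · rw [Fintype.card_fun]
          push_cast
          simp
        · rw [← Finset.mul_sum, Finset.sum_boole,
            show (Finset.univ.filter (fun S => S ∈ D)) = D from by ext S; simp]
          ring

set_option maxHeartbeats 2000000 in
lemma exists_good {n : ℕ} (hn : 0 < n) (D : Finset (Finset (Fin n))) (hD : 0 < D.card) :
    ∃ ε : Finset (Fin n) → Bool, ∀ x : Fin n → Bool,
      |∑ S ∈ D, sgn (ε S) * chi S x| ≤ 2 * Real.sqrt (n * D.card) := by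
  classical
  set N : ℝ := (D.card : ℝ) with hNdef
  have hN : 0 < N := by rw [hNdef]; exact_mod_cast hD
  have hnR : 0 < (n : ℝ) := by exact_mod_cast hn
  set t : ℝ := 2 * Real.sqrt (n * D.card) with htdef
  have ht2 : t ^ 2 = 4 * (n * N) := by
    rw [htdef, mul_pow, Real.sq_sqrt (by positivity)]
    norm_num
    exact Or.inl hNdef.symm
  have ht0 : 0 ≤ t := by positivity
  set l : ℝ := t / N with hldef
  have hl0 : 0 ≤ l := div_nonneg ht0 hN.le
  set K : ℝ := (Fintype.card (Finset (Fin n) → Bool) : ℝ) with hKdef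
  have hK : 0 < K := by
    rw [hKdef]; exact_mod_cast Fintype.card_pos
  clear_value K
  clear_value N t l
  by_contra hbad
  push_neg at hbad
  -- bad sets
  set L : (Finset (Fin n) → Bool) → (Fin n → Bool) → ℝ :=
    fun ε x => ∑ S ∈ D, sgn (ε S) * chi S x with hLdef
  set B : (Fin n → Bool) → Finset (Finset (Fin n) → Bool) :=
    fun x => Finset.univ.filter (fun ε => t < |L ε x|) with hBdef
  -- per-x bound
  have perx : ∀ x : Fin n → Bool, ((B x).card : ℝ) ≤ 2 * K * Real.exp (-(2 * n)) := by
    intro x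
    have habs : ∀ ε ∈ B x, (1 : ℝ) ≤ Real.exp (l * (L ε x - t)) + Real.exp (l * (-(L ε x) - t)) := by
      intro ε hε
      rw [hBdef] at hε
      simp only [Finset.mem_filter] at hε
      rcases abs_cases (L ε x) with ⟨heq, _⟩ | ⟨heq, _⟩
      · have : 0 ≤ l * (L ε x - t) := by
          apply mul_nonneg hl0; rw [← heq]; linarith [hε.2]
        have h1 := Real.one_le_exp this
        linarith [Real.exp_pos (l * (-(L ε x) - t))]
      · have : 0 ≤ l * (-(L ε x) - t) := by
          apply mul_nonneg hl0; rw [← heq] at *; linarith [hε.2]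
        have h1 := Real.one_le_exp this
        linarith [Real.exp_pos (l * (L ε x - t))]
    have step1 : ((B x).card : ℝ)
        ≤ ∑ ε : Finset (Fin n) → Bool,
            (Real.exp (l * (L ε x - t)) + Real.exp (l * (-(L ε x) - t))) := by
      rw [Finset.card_eq_sum_ones]
      push_cast
      calc (∑ ε ∈ B x, (1:ℝ))
          ≤ ∑ ε ∈ B x, (Real.exp (l * (L ε x - t)) + Real.exp (l * (-(L ε x) - t))) :=
            Finset.sum_le_sum habs
        _ ≤ ∑ ε : Finset (Fin n) → Bool,
              (Real.exp (l * (L ε x - t)) + Real.exp (l * (-(L ε x) - t))) := by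
            apply Finset.sum_le_sum_of_subset_of_nonneg (Finset.subset_univ _)
            intro ε _ _
            positivity
    have hmgf1 : ∑ ε : Finset (Fin n) → Bool, Real.exp (l * L ε x) ≤ K * Real.exp (l ^ 2 * N / 2) := by
      have h := mgf_bound D l (fun S => chi S x) (fun S => chi_cases S x)
      rw [← hKdef, ← hNdef] at h
      simpa [hLdef] using h
    have hmgf2 : ∑ ε : Finset (Fin n) → Bool, Real.exp ((-l) * L ε x) ≤ K * Real.exp ((-l) ^ 2 * N / 2) := by
      have h := mgf_bound D (-l) (fun S => chi S x) (fun S => chi_cases S x)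
      rw [← hKdef, ← hNdef] at h
      simpa [hLdef] using h
    have expand : ∀ s : ℝ, Real.exp (l * (s - t)) = Real.exp (-(l*t)) * Real.exp (l * s) := by
      intro s; rw [← Real.exp_add]; ring_nf
    have expand2 : ∀ s : ℝ, Real.exp (l * (-s - t)) = Real.exp (-(l*t)) * Real.exp ((-l) * s) := by
      intro s; rw [← Real.exp_add]; ring_nf
    have step2 : ((B x).card : ℝ)
        ≤ Real.exp (-(l*t)) * (2 * K * Real.exp (l ^ 2 * N / 2)) := by
      calc ((B x).card : ℝ)
          ≤ ∑ ε : Finset (Fin n) → Bool,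
              (Real.exp (l * (L ε x - t)) + Real.exp (l * (-(L ε x) - t))) := step1
        _ = Real.exp (-(l*t)) *
              ((∑ ε : Finset (Fin n) → Bool, Real.exp (l * L ε x))
               + (∑ ε : Finset (Fin n) → Bool, Real.exp ((-l) * L ε x))) := by
            rw [Finset.sum_add_distrib, mul_add, Finset.mul_sum, Finset.mul_sum]
            congr 1
            · exact Finset.sum_congr rfl (fun ε _ => expand (L ε x))
            · exact Finset.sum_congr rfl (fun ε _ => expand2 (L ε x))
        _ ≤ Real.exp (-(l*t)) * (K * Real.exp (l ^ 2 * N / 2) + K * Real.exp ((-l) ^ 2 * N / 2)) := by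
            apply mul_le_mul_of_nonneg_left _ (Real.exp_pos _).le
            exact add_le_add hmgf1 hmgf2
        _ = Real.exp (-(l*t)) * (2 * K * Real.exp (l ^ 2 * N / 2)) := by ring_nf
    have hexp : -(l*t) + l ^ 2 * N / 2 = -(2*n) := by
      rw [hldef]
      field_simp
      nlinarith [ht2]
    calc ((B x).card : ℝ)
        ≤ Real.exp (-(l*t)) * (2 * K * Real.exp (l ^ 2 * N / 2)) := step2
      _ = 2 * K * Real.exp (-(l*t) + l ^ 2 * N / 2) := by rw [Real.exp_add]; ring
      _ = 2 * K * Real.exp (-(2*n)) := by rw [hexp]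
  -- union bound
  have cover : (Finset.univ : Finset (Finset (Fin n) → Bool)) ⊆
      Finset.univ.biUnion B := by
    intro ε _
    obtain ⟨x, hx⟩ := hbad ε
    refine Finset.mem_biUnion.2 ⟨x, Finset.mem_univ x, ?_⟩
    rw [hBdef]
    simp only [Finset.mem_filter]
    exact ⟨Finset.mem_univ ε, hx⟩
  have hcard : K ≤ (2:ℝ)^n * (2 * K * Real.exp (-(2*n))) := by
    have h1 : (Finset.univ : Finset (Finset (Fin n) → Bool)).card
        ≤ ∑ x : Fin n → Bool, (B x).card :=
      le_trans (Finset.card_le_card cover) (Finset.card_biUnion_le)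
    have h2 : K ≤ ∑ x : Fin n → Bool, ((B x).card : ℝ) := by
      rw [hKdef, ← Finset.card_univ]
      exact_mod_cast h1
    calc K ≤ ∑ x : Fin n → Bool, ((B x).card : ℝ) := h2
      _ ≤ ∑ x : Fin n → Bool, 2 * K * Real.exp (-(2*n)) :=
          Finset.sum_le_sum (fun x _ => perx x)
      _ = (2:ℝ)^n * (2 * K * Real.exp (-(2*n))) := by
          rw [Finset.sum_const, Finset.card_univ, Fintype.card_fun]
          simp [Fintype.card_bool, Fintype.card_fin]
  -- contradiction: exp (2n) <= 2^(n+1) < exp (2n)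
  have h1 : (1:ℝ) ≤ 2^n * 2 * Real.exp (-(2*(n:ℝ))) := by
    rcases le_or_gt 1 ((2:ℝ)^n * 2 * Real.exp (-(2*(n:ℝ)))) with h | h
    · exact h
    · exfalso; nlinarith [hcard, hK]
  have hmul : Real.exp (-(2*(n:ℝ))) * Real.exp (2*(n:ℝ)) = 1 := by
    rw [← Real.exp_add]; norm_num
  have hle : Real.exp (2*(n:ℝ)) ≤ (2:ℝ)^n * 2 := by
    have h2 := mul_le_mul_of_nonneg_right h1 (Real.exp_pos (2*(n:ℝ))).le
    calc Real.exp (2*(n:ℝ)) = 1 * Real.exp (2*(n:ℝ)) := (one_mul _).symm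
      _ ≤ 2 ^ n * 2 * Real.exp (-(2 * (n:ℝ))) * Real.exp (2 * (n:ℝ)) := h2
      _ = (2:ℝ)^n * 2 := by rw [mul_assoc, hmul, mul_one]
  have hlt : (2:ℝ)^n * 2 < Real.exp (2*(n:ℝ)) := by
    have h1' : (2:ℝ) < Real.exp 1 := by
      have := Real.exp_one_gt_d9
      norm_num at this ⊢
      linarith
    have h4 : (4:ℝ) < Real.exp 2 := by
      have h2 : Real.exp 2 = Real.exp 1 * Real.exp 1 := by
        rw [← Real.exp_add]; norm_num
      nlinarith
    calc (2:ℝ)^n * 2 ≤ (4:ℝ)^n := by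
          rw [show (4:ℝ) = 2*2 by norm_num, mul_pow]
          have h2n : (2:ℝ) ≤ 2^n := by
            calc (2:ℝ) = 2^1 := (pow_one 2).symm
            _ ≤ 2^n := pow_le_pow_right₀ (by norm_num) hn
          nlinarith [pow_pos (by norm_num : (0:ℝ) < 2) n]
      _ < (Real.exp 2)^n := by
          exact pow_lt_pow_left₀ h4 (by norm_num) hn.ne'
      _ = Real.exp (2*(n:ℝ)) := by
          rw [← Real.exp_nat_mul]
          congr 1
          ring
  linarith

lemma fcoeff_lin {n : ℕ} (D : Finset (Finset (Fin n))) (a : ℝ)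
    (ε : Finset (Fin n) → Bool) (T : Finset (Fin n)) :
    fcoeff (fun x => a * ∑ S ∈ D, sgn (ε S) * chi S x) T
      = if T ∈ D then a * sgn (ε T) else 0 := by
  classical
  unfold fcoeff
  have h1 : ∑ x : Fin n → Bool, (a * ∑ S ∈ D, sgn (ε S) * chi S x) * chi T x
      = (if T ∈ D then a * sgn (ε T) else 0) * 2 ^ n := by
    calc ∑ x : Fin n → Bool, (a * ∑ S ∈ D, sgn (ε S) * chi S x) * chi T x
        = ∑ x : Fin n → Bool, ∑ S ∈ D, a * sgn (ε S) * (chi S x * chi T x) := by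
          refine Finset.sum_congr rfl (fun x _ => ?_)
          rw [Finset.mul_sum, Finset.sum_mul]
          exact Finset.sum_congr rfl (fun S _ => by ring)
      _ = ∑ S ∈ D, ∑ x : Fin n → Bool, a * sgn (ε S) * (chi S x * chi T x) :=
          Finset.sum_comm
      _ = ∑ S ∈ D, a * sgn (ε S) * (if S = T then (2:ℝ)^n else 0) := by
          refine Finset.sum_congr rfl (fun S _ => ?_)
          rw [← Finset.mul_sum, sum_chi_mul_chi]
      _ = ∑ S ∈ D, (if S = T then a * sgn (ε S) * 2^n else 0) := by
          refine Finset.sum_congr rfl (fun S _ => ?_)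
          by_cases h : S = T <;> simp [h]
      _ = (if T ∈ D then a * sgn (ε T) else 0) * 2 ^ n := by
          rw [Finset.sum_ite_eq' D T (fun S => a * sgn (ε S) * 2^n)]
          by_cases h : T ∈ D <;> simp [h]
  rw [h1, mul_div_assoc, div_self (by positivity : ((2:ℝ)^n) ≠ 0), mul_one]


/-- For all positive integers `d ≤ n` there is `f : {±1}^n → [-1,1]`, homogeneous of
degree `d`, with `‖f̂_d‖_1 = (1/2)·√((1/n)·binom(n,d))`. -/
theorem stmt5 (n d : ℕ) (hd : 0 < d) (hdn : d ≤ n) :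
    ∃ f : (Fin n → Bool) → ℝ,
      (∀ x, |f x| ≤ 1) ∧
      (∀ S : Finset (Fin n), S.card ≠ d → fcoeff f S = 0) ∧
      ∑ S ∈ Finset.univ.filter (fun S : Finset (Fin n) => S.card = d), |fcoeff f S| =
        (1 / 2) * Real.sqrt ((1 / n) * (n.choose d : ℝ)) := by
  classical
  have hn : 0 < n := lt_of_lt_of_le hd hdn
  set D : Finset (Finset (Fin n)) :=
    Finset.univ.filter (fun S : Finset (Fin n) => S.card = d) with hDdef
  have hDcard : D.card = n.choose d := by
    rw [hDdef, show Finset.univ.filter (fun S : Finset (Fin n) => S.card = d)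
        = Finset.powersetCard d (Finset.univ : Finset (Fin n)) from by
      rw [Finset.powersetCard_eq_filter, Finset.powerset_univ],
      Finset.card_powersetCard, Finset.card_univ, Fintype.card_fin]
  have hNpos : 0 < D.card := by rw [hDcard]; exact Nat.choose_pos hdn
  obtain ⟨ε, hε⟩ := exists_good hn D hNpos
  have hsq : (0:ℝ) < Real.sqrt (n * D.card) := by
    apply Real.sqrt_pos.2
    have : (0:ℝ) < (n:ℝ) := by exact_mod_cast hn
    have h2 : (0:ℝ) < (D.card:ℝ) := by exact_mod_cast hNpos
    positivity
  set a : ℝ := 1 / (2 * Real.sqrt (n * D.card)) with hadef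
  have ha : 0 < a := by rw [hadef]; positivity
  refine ⟨fun x => a * ∑ S ∈ D, sgn (ε S) * chi S x, ?_, ?_, ?_⟩
  · intro x
    rw [abs_mul, abs_of_pos ha]
    calc a * |∑ S ∈ D, sgn (ε S) * chi S x| ≤ a * (2 * Real.sqrt (n * D.card)) :=
          mul_le_mul_of_nonneg_left (hε x) ha.le
      _ = 1 := by rw [hadef]; field_simp
  · intro S hS
    rw [fcoeff_lin, if_neg]
    rw [hDdef]
    simp [hS]
  · have hterm : ∀ S ∈ D, |fcoeff (fun x => a * ∑ S ∈ D, sgn (ε S) * chi S x) S| = a := by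
      intro S hS
      rw [fcoeff_lin, if_pos hS, abs_mul, abs_of_pos ha]
      rcases sgn_cases (ε S) with h | h <;> rw [h] <;> norm_num
    rw [Finset.sum_congr rfl hterm, Finset.sum_const, nsmul_eq_mul]
    rw [hadef, hDcard]
    -- N * (1/(2*sqrt(n*N))) = 1/2 * sqrt((1/n)*N)
    set N : ℝ := (n.choose d : ℝ) with hN
    have hNpos' : (0:ℝ) < N := by rw [hN]; exact_mod_cast Nat.choose_pos hdn
    have hnpos' : (0:ℝ) < (n:ℝ) := by exact_mod_cast hn
    rw [show (1/(n:ℝ)) * N = N / n by ring, Real.sqrt_div hNpos'.le,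
      Real.sqrt_mul (le_of_lt hnpos') N]
    have hsN : Real.sqrt N * Real.sqrt N = N := Real.mul_self_sqrt hNpos'.le
    have h1 : Real.sqrt N ≠ 0 := by positivity
    have h2 : Real.sqrt (n:ℝ) ≠ 0 := by positivity
    field_simp
    nlinarith [hsN, Real.sqrt_nonneg N, Real.sqrt_nonneg (n:ℝ)]
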